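/- arXiv:1410.7414 — 2 statements merged into one kernel-verified Lean document; each statement's English description precedes it below -/
import Mathlib

section
/- With M_t = {α ∈ ℤ^d : κ_α(ν,γ) ≤ t}, there exists a constant C (depending on ν, γ, d but not t) such that |M_t| ≤ C · t^{γ^{-1}} for all t ≥ 1, where γ^{-1} = Σ_{j=1}^d γ_j^{-1}. -/
/-- Cardinality of the ellipsoid-ball `M_t` grows at most like `t^{γ⁻¹}` with
`γ⁻¹ = ∑ 1/γ_j`. -/
theorem Mt_card_poly_bound (d : ℕ) (ν γ : Fin d → ℝ)
    (hν : ∀ i, 0 < ν i) (hγ : ∀ i, 0 < γ i)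
    (κ : (Fin d → ℤ) → ℝ)
    (hκ : ∀ α, κ α = Real.sqrt (∑ i, (ν i * |(α i : ℝ)|) ^ (2 * γ i))) :
    ∃ C > 0, ∀ t : ℝ, 1 ≤ t →
      (Set.ncard {α : Fin d → ℤ | κ α ≤ t} : ℝ) ≤ C * t ^ (∑ j, 1 / γ j) := by
  classical
  refine ⟨∏ i, (2 / ν i + 1), Finset.prod_pos (fun i _ => by have := hν i; positivity), ?_⟩
  intro t ht
  have ht0 : (0:ℝ) < t := lt_of_lt_of_le one_pos ht
  set B : Fin d → ℝ := fun i => t ^ (1 / γ i) / ν i with hB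
  have hB1 : ∀ i, 1 ≤ t ^ (1 / γ i) := fun i =>
    Real.one_le_rpow ht (le_of_lt (by have := hγ i; positivity))
  have hBpos : ∀ i, 0 < B i := fun i => by
    have h1 := hB1 i; have h2 := hν i
    simp only [hB]; positivity
  set N : Fin d → ℤ := fun i => ⌊B i⌋ with hN
  have hNnonneg : ∀ i, 0 ≤ N i := fun i => Int.floor_nonneg.mpr (hBpos i).le
  have hsub : {α : Fin d → ℤ | κ α ≤ t} ⊆ ↑(Finset.Icc (fun i => -N i) N) := by
    intro α hα
    simp only [Set.mem_setOf_eq, hκ] at hα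
    have hsumnn : (0:ℝ) ≤ ∑ i, (ν i * |(α i : ℝ)|) ^ (2 * γ i) :=
      Finset.sum_nonneg fun i _ => Real.rpow_nonneg (mul_nonneg (hν i).le (abs_nonneg _)) _
    have hsum : ∑ i, (ν i * |(α i : ℝ)|) ^ (2 * γ i) ≤ t ^ (2:ℕ) := by
      calc ∑ i, (ν i * |(α i : ℝ)|) ^ (2 * γ i)
          = (Real.sqrt (∑ i, (ν i * |(α i : ℝ)|) ^ (2 * γ i))) ^ (2:ℕ) :=
            (Real.sq_sqrt hsumnn).symm
        _ ≤ t ^ (2:ℕ) := pow_le_pow_left₀ (Real.sqrt_nonneg _) hα 2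
    have key : ∀ i, |(α i : ℝ)| ≤ B i := by
      intro i
      have hterm : (ν i * |(α i : ℝ)|) ^ (2 * γ i) ≤ t ^ ((2:ℝ)) := by
        rw [Real.rpow_two]
        calc (ν i * |(α i : ℝ)|) ^ (2 * γ i)
            ≤ ∑ j, (ν j * |(α j : ℝ)|) ^ (2 * γ j) :=
              Finset.single_le_sum (f := fun j => (ν j * |(α j : ℝ)|) ^ (2 * γ j))
                (fun j _ => Real.rpow_nonneg (mul_nonneg (hν j).le (abs_nonneg _)) _)
                (Finset.mem_univ i)
          _ ≤ t ^ (2:ℕ) := hsum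
      have hx : (0:ℝ) ≤ ν i * |(α i : ℝ)| := mul_nonneg (hν i).le (abs_nonneg _)
      have he : (0:ℝ) < 2 * γ i := by have := hγ i; positivity
      have hmono := Real.rpow_le_rpow (Real.rpow_nonneg hx _) hterm
        (le_of_lt (by positivity : (0:ℝ) < 1 / (2 * γ i)))
      rw [← Real.rpow_mul hx, mul_one_div_cancel he.ne', Real.rpow_one,
        ← Real.rpow_mul ht0.le] at hmono
      have hexp : 2 * (1 / (2 * γ i)) = 1 / γ i := by
        field_simp
      rw [hexp] at hmono
      rw [hB]
      exact (le_div_iff₀' (hν i)).mpr hmono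
    simp only [Finset.coe_Icc, Set.mem_Icc, Pi.le_def]
    constructor
    · intro i
      have : (-(α i) : ℝ) ≤ B i := le_trans (neg_le_abs _) (key i)
      have h := Int.le_floor.mpr (by exact_mod_cast this : ((-(α i) : ℤ) : ℝ) ≤ B i)
      exact neg_le.mp h
    · intro i
      exact Int.le_floor.mpr (le_trans (le_abs_self _) (key i))
  have hfin : ((Finset.Icc (fun i => -N i) N : Finset (Fin d → ℤ)) : Set (Fin d → ℤ)).Finite := (Finset.Icc _ _).finite_toSet
  have hcard : (Set.ncard {α : Fin d → ℤ | κ α ≤ t} : ℝ)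
      ≤ ((Finset.Icc (fun i => -N i) N).card : ℝ) := by
    have := Set.ncard_le_ncard hsub hfin
    rw [Set.ncard_coe_finset] at this
    exact_mod_cast this
  refine hcard.trans ?_
  rw [Pi.card_Icc]
  push_cast
  have hfac : ∀ i ∈ Finset.univ, ((Finset.Icc (-N i) (N i)).card : ℝ)
      ≤ (2 / ν i + 1) * t ^ (1 / γ i) := by
    intro i _
    rw [Int.card_Icc]
    have h1 : N i + 1 - -N i = 2 * N i + 1 := by ring
    rw [h1]
    have h2 : ((2 * N i + 1).toNat : ℝ) = 2 * (N i : ℝ) + 1 := by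
      have hge := hNnonneg i
      have h := Int.toNat_of_nonneg (by omega : (0:ℤ) ≤ 2 * N i + 1)
      exact_mod_cast congrArg (fun z : ℤ => (z : ℝ)) h
    rw [h2]
    have h3 : (N i : ℝ) ≤ B i := Int.floor_le _
    have h4 : 2 * (N i : ℝ) + 1 ≤ 2 * B i + 1 := by linarith
    refine h4.trans ?_
    have h5 : 2 * B i = 2 / ν i * t ^ (1 / γ i) := by
      rw [hB]; ring
    rw [h5]
    nlinarith [hB1 i]
  calc (∏ i, ((Finset.Icc (-N i) (N i)).card : ℝ))
      ≤ ∏ i, (2 / ν i + 1) * t ^ (1 / γ i) :=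
        Finset.prod_le_prod (fun i _ => by positivity) hfac
    _ = (∏ i, (2 / ν i + 1)) * t ^ (∑ j, 1 / γ j) := by
        rw [Finset.prod_mul_distrib, Real.rpow_sum_of_pos ht0]
end

section
/- Let x, y ∈ ℝ^d, σ > 0, and consider random features z(x) = √(2/D)(cos(ω₁ᵀx + b₁), …, cos(ω_Dᵀx + b_D)) with ω_i ~ N(0, σ^{-2}I_d) i.i.d. and b_i ~ Unif([0,2π]) i.i.d. Then E[z(x)ᵀz(y)] = exp(−‖x−y‖²/(2σ²)), i.e., the random feature inner product is an unbiased estimator of the Gaussian RBF kernel. -/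
open MeasureTheory ProbabilityTheory Real
open scoped NNReal ENNReal

lemma aux_gauss_cexp (v : ℝ≥0) (hv : v ≠ 0) (a : ℝ) :
    ∫ t : ℝ, Complex.exp (Complex.I * a * t) ∂(gaussianReal 0 v) =
      ((Real.exp (-(a ^ 2 * v) / 2) : ℝ) : ℂ) := by
  have hv0 : (0:ℝ) < (v:ℝ) := NNReal.coe_pos.mpr (pos_iff_ne_zero.mpr hv)
  rw [gaussianReal_of_var_ne_zero 0 hv]
  rw [show gaussianPDF 0 v = fun t => ((gaussianPDFReal 0 v t).toNNReal : ℝ≥0∞) from rfl]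
  rw [integral_withDensity_eq_integral_smul
    ((measurable_gaussianPDFReal 0 v).real_toNNReal) _]
  have hpt : ∀ t : ℝ, (gaussianPDFReal 0 v t).toNNReal • Complex.exp (Complex.I * a * t)
      = ((Real.sqrt (2 * π * v))⁻¹ : ℝ) •
        (Complex.exp (Complex.I * a * t) * Complex.exp (-(1/(2*(v:ℝ)) : ℂ) * (t:ℂ) ^ 2)) := by
    intro t
    rw [NNReal.smul_def, Real.coe_toNNReal _ (gaussianPDFReal_nonneg 0 v t)]
    rw [gaussianPDFReal]
    rw [show ((t - 0 : ℝ)) = t by ring]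
    rw [mul_smul]
    congr 1
    rw [Complex.real_smul, mul_comm]
    congr 1
    rw [Complex.ofReal_exp]
    congr 1
    push_cast
    field_simp
  simp_rw [hpt]
  rw [integral_smul]
  rw [fourierIntegral_gaussian (by simpa using by positivity) (a : ℂ)]
  have e1 : ((π:ℂ) / (1/(2*(v:ℝ)):ℂ)) = ((2*π*(v:ℝ) : ℝ) : ℂ) := by
    push_cast; field_simp
  have e2 : (-(a:ℂ)^2 / (4 * (1/(2*(v:ℝ)):ℂ))) = ((-(a^2*(v:ℝ))/2 : ℝ) : ℂ) := by
    push_cast; field_simp; ring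
  rw [e1, e2, Complex.ofReal_exp]
  rw [show ((1/2 : ℂ)) = ((1/2 : ℝ) : ℂ) by norm_num]
  rw [← Complex.ofReal_cpow (by positivity)]
  rw [← Real.sqrt_eq_rpow]
  rw [Complex.real_smul, ← mul_assoc, ← Complex.ofReal_mul, inv_mul_cancel₀ (by positivity),
    Complex.ofReal_one, one_mul]

lemma aux_gauss_pi_cos (d : ℕ) (v : ℝ≥0) (hv : v ≠ 0) (u : Fin d → ℝ) :
    ∫ w : Fin d → ℝ, Real.cos (∑ j, w j * u j)
        ∂(Measure.pi fun _ : Fin d => gaussianReal 0 v) =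
      Real.exp (-(∑ j, (u j) ^ 2 : ℝ) * v / 2) := by
  letI : MeasureSpace ℝ := ⟨gaussianReal 0 v⟩
  have hvol : (volume : Measure (Fin d → ℝ)) = Measure.pi fun _ : Fin d => gaussianReal 0 v := rfl
  haveI : IsProbabilityMeasure (volume : Measure (Fin d → ℝ)) := by
    rw [hvol]; infer_instance
  haveI : IsProbabilityMeasure (volume : Measure ℝ) := by
    show IsProbabilityMeasure (gaussianReal 0 v); infer_instance
  have hmeasθ : Measurable fun w : Fin d → ℝ => ∑ j, w j * u j :=
    Finset.measurable_sum _ fun j _ => (measurable_pi_apply j).mul_const _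
  -- complex integral
  have hC : ∫ w : Fin d → ℝ, Complex.exp (Complex.I * (∑ j, w j * u j : ℝ)) =
      ((Real.exp (-(∑ j, (u j) ^ 2 : ℝ) * v / 2) : ℝ) : ℂ) := by
    have hprod : ∀ w : Fin d → ℝ, Complex.exp (Complex.I * (∑ j, w j * u j : ℝ)) =
        ∏ j, Complex.exp (Complex.I * (u j) * (w j)) := by
      intro w
      rw [← Complex.exp_sum]
      congr 1
      push_cast
      rw [Finset.mul_sum]
      exact Finset.sum_congr rfl fun j _ => by ring
    simp_rw [hprod]
    erw [MeasureTheory.integral_fintype_prod_eq_prod (𝕜 := ℂ) (μ := fun _ => volume)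
      (fun j (t : ℝ) => Complex.exp (Complex.I * (u j) * t))]
    have : ∀ j ∈ Finset.univ, (∫ t : ℝ, Complex.exp (Complex.I * (u j) * t)) =
        ((Real.exp (-((u j) ^ 2 * v) / 2) : ℝ) : ℂ) := fun j _ => aux_gauss_cexp v hv (u j)
    rw [Finset.prod_congr rfl this, ← Complex.ofReal_prod]
    rw [← Real.exp_sum]
    congr 1
    congr 1
    simp_rw [neg_div]
    rw [Finset.sum_neg_distrib, neg_mul, neg_div, Finset.sum_mul, Finset.sum_div]
  -- pass to real part
  have hint : Integrable (fun w : Fin d → ℝ =>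
      Complex.exp (Complex.I * (∑ j, w j * u j : ℝ))) volume := by
    refine Integrable.mono' (integrable_const 1)
      ((Complex.measurable_exp.comp
        ((Complex.measurable_ofReal.comp hmeasθ).const_mul Complex.I)).aestronglyMeasurable)
      (ae_of_all _ fun w => ?_)
    rw [Complex.norm_exp]
    simp
  have hre : ∀ w : Fin d → ℝ, Real.cos (∑ j, w j * u j) =
      (Complex.exp (Complex.I * (∑ j, w j * u j : ℝ))).re := by
    intro w
    rw [mul_comm, Complex.exp_ofReal_mul_I_re]
  calc ∫ w : Fin d → ℝ, Real.cos (∑ j, w j * u j)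
        ∂(Measure.pi fun _ : Fin d => gaussianReal 0 v)
      = ∫ w : Fin d → ℝ, (Complex.exp (Complex.I * (∑ j, w j * u j : ℝ))).re := by
        rw [← hvol]; exact integral_congr_ae (ae_of_all _ fun w => hre w)
    _ = (∫ w : Fin d → ℝ, Complex.exp (Complex.I * (∑ j, w j * u j : ℝ))).re := by
        exact (RCLike.re_eq_complex_re ▸ integral_re hint : _)
    _ = _ := by rw [hC, Complex.ofReal_re]

lemma aux_unif_cos :
    ∫ t : ℝ, Real.cos (2 * t)
      ∂((ENNReal.ofReal (2 * π))⁻¹ • volume.restrict (Set.Icc (0:ℝ) (2 * π))) = 0 := by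
  rw [integral_smul_measure]
  have h : ∫ t in Set.Icc (0:ℝ) (2 * π), Real.cos (2 * t) = 0 := by
    rw [integral_Icc_eq_integral_Ioc,
      ← intervalIntegral.integral_of_le (by positivity : (0:ℝ) ≤ 2 * π)]
    rw [intervalIntegral.integral_comp_mul_left Real.cos (two_ne_zero)]
    rw [integral_cos]
    have h4 : Real.sin (2 * (2 * π)) = 0 := by
      have := Real.sin_nat_mul_pi 4
      rw [show ((4:ℕ):ℝ) * π = 2 * (2 * π) by push_cast; ring] at this
      exact this
    simp [h4]
  rw [h, smul_zero]

lemma aux_unif_sin :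
    ∫ t : ℝ, Real.sin (2 * t)
      ∂((ENNReal.ofReal (2 * π))⁻¹ • volume.restrict (Set.Icc (0:ℝ) (2 * π))) = 0 := by
  rw [integral_smul_measure]
  have h : ∫ t in Set.Icc (0:ℝ) (2 * π), Real.sin (2 * t) = 0 := by
    rw [integral_Icc_eq_integral_Ioc,
      ← intervalIntegral.integral_of_le (by positivity : (0:ℝ) ≤ 2 * π)]
    rw [intervalIntegral.integral_comp_mul_left Real.sin (two_ne_zero)]
    rw [integral_sin]
    have h4 : Real.cos (2 * (2 * π)) = 1 := by
      have := Real.cos_nat_mul_two_pi 2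
      rw [show ((2:ℕ):ℝ) * (2 * π) = 2 * (2 * π) by push_cast; ring] at this
      exact this
    simp [h4]
  rw [h, smul_zero]

lemma aux_key (a b c : ℝ) :
    Real.cos (a + c) * Real.cos (b + c) =
      (Real.cos (a - b) +
        (Real.cos (a + b) * Real.cos (2 * c) - Real.sin (a + b) * Real.sin (2 * c))) / 2 := by
  have h := Real.cos_add_cos (a - b) (a + b + 2 * c)
  rw [show ((a - b) + (a + b + 2 * c)) / 2 = a + c by ring,
    show ((a - b) - (a + b + 2 * c)) / 2 = -(b + c) by ring, Real.cos_neg] at h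
  have h2 := Real.cos_add (a + b) (2 * c)
  rw [h2] at h
  linarith

/-- Random Kitchen Sinks: the random-feature inner product
`z(x)ᵀz(y)`, with `z(x) = √(2/D)(cos(ω_iᵀx + b_i))_{i≤D}`,
`ω_i ~ N(0, σ⁻²I_d)` and `b_i ~ Unif[0,2π]`, is an unbiased estimator of the
Gaussian RBF kernel `exp(−‖x−y‖²/(2σ²))`. -/
theorem rks_unbiased (d D : ℕ) (hD : 0 < D) (σ : ℝ) (hσ : 0 < σ)
    {Ω : Type*} [MeasurableSpace Ω] (P : Measure Ω) [IsProbabilityMeasure P]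
    (ω : Fin D → Ω → (Fin d → ℝ)) (b : Fin D → Ω → ℝ)
    (hmeas_ω : ∀ i, Measurable (ω i)) (hmeas_b : ∀ i, Measurable (b i))
    (hmap_ω : ∀ i, Measure.map (ω i) P =
      Measure.pi (fun _ : Fin d => gaussianReal 0 (Real.toNNReal (1 / σ ^ 2))))
    (hmap_b : ∀ i, Measure.map (b i) P =
      (ENNReal.ofReal (2 * π))⁻¹ • volume.restrict (Set.Icc (0:ℝ) (2 * π)))
    (hindep : ∀ i, IndepFun (ω i) (b i) P)
    (x y : Fin d → ℝ) :
    (∫ ω' : Ω, ∑ i : Fin D,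
        (Real.sqrt (2 / D) * Real.cos ((∑ j, ω i ω' j * x j) + b i ω')) *
        (Real.sqrt (2 / D) * Real.cos ((∑ j, ω i ω' j * y j) + b i ω')) ∂P) =
      Real.exp (-(∑ j, (x j - y j) ^ 2) / (2 * σ ^ 2)) := by
  have hD' : (0:ℝ) < (D:ℝ) := by exact_mod_cast hD
  set v : ℝ≥0 := Real.toNNReal (1 / σ ^ 2) with hvdef
  have hv : v ≠ 0 := by
    simp only [hvdef, ne_eq, Real.toNNReal_eq_zero, not_le]
    positivity
  have hvcoe : (v : ℝ) = 1 / σ ^ 2 := Real.coe_toNNReal _ (by positivity)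
  set K : ℝ := Real.exp (-(∑ j, (x j - y j) ^ 2) / (2 * σ ^ 2)) with hK
  -- abbreviations
  set f1 : Fin D → Ω → ℝ := fun i ω' => Real.cos (∑ j, ω i ω' j * (x j - y j)) with hf1
  set g2 : Fin D → Ω → ℝ := fun i ω' => Real.cos (∑ j, ω i ω' j * (x j + y j)) with hg2
  set g3 : Fin D → Ω → ℝ := fun i ω' => Real.sin (∑ j, ω i ω' j * (x j + y j)) with hg3
  set h2 : Fin D → Ω → ℝ := fun i ω' => Real.cos (2 * b i ω') with hh2
  set h3 : Fin D → Ω → ℝ := fun i ω' => Real.sin (2 * b i ω') with hh3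
  -- measurability
  have mf1 : ∀ i, Measurable (f1 i) := fun i =>
    (Real.measurable_cos.comp (Finset.measurable_sum _ fun j _ =>
      ((measurable_pi_apply j).comp (hmeas_ω i)).mul_const _))
  have mg2 : ∀ i, Measurable (g2 i) := fun i =>
    (Real.measurable_cos.comp (Finset.measurable_sum _ fun j _ =>
      ((measurable_pi_apply j).comp (hmeas_ω i)).mul_const _))
  have mg3 : ∀ i, Measurable (g3 i) := fun i =>
    (Real.measurable_sin.comp (Finset.measurable_sum _ fun j _ =>
      ((measurable_pi_apply j).comp (hmeas_ω i)).mul_const _))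
  have mh2 : ∀ i, Measurable (h2 i) := fun i =>
    (Real.measurable_cos.comp ((hmeas_b i).const_mul 2))
  have mh3 : ∀ i, Measurable (h3 i) := fun i =>
    (Real.measurable_sin.comp ((hmeas_b i).const_mul 2))
  -- integrability helper
  have hint : ∀ {f : Ω → ℝ}, Measurable f → (∀ ω', |f ω'| ≤ 1) → Integrable f P := by
    intro f hm hb
    exact Integrable.mono' (integrable_const 1) hm.aestronglyMeasurable
      (ae_of_all _ fun ω' => by simpa using hb ω')
  have if1 : ∀ i, Integrable (f1 i) P := fun i =>
    hint (mf1 i) fun ω' => Real.abs_cos_le_one _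
  have ig2h2 : ∀ i, Integrable (fun ω' => g2 i ω' * h2 i ω') P := fun i =>
    hint ((mg2 i).mul (mh2 i)) fun ω' => by
      rw [abs_mul]
      exact mul_le_one₀ (Real.abs_cos_le_one _) (abs_nonneg _) (Real.abs_cos_le_one _)
  have ig3h3 : ∀ i, Integrable (fun ω' => g3 i ω' * h3 i ω') P := fun i =>
    hint ((mg3 i).mul (mh3 i)) fun ω' => by
      rw [abs_mul]
      exact mul_le_one₀ (Real.abs_sin_le_one _) (abs_nonneg _) (Real.abs_sin_le_one _)
  -- pointwise identity
  have hpt : ∀ (i : Fin D) (ω' : Ω),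
      (Real.sqrt (2 / D) * Real.cos ((∑ j, ω i ω' j * x j) + b i ω')) *
        (Real.sqrt (2 / D) * Real.cos ((∑ j, ω i ω' j * y j) + b i ω')) =
      (1 / D) * f1 i ω' + (1 / D) * (g2 i ω' * h2 i ω') - (1 / D) * (g3 i ω' * h3 i ω') := by
    intro i ω'
    have hsq : Real.sqrt (2 / D) * Real.sqrt (2 / D) = 2 / D :=
      Real.mul_self_sqrt (by positivity)
    rw [mul_mul_mul_comm, hsq]
    rw [aux_key (∑ j, ω i ω' j * x j) (∑ j, ω i ω' j * y j) (b i ω')]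
    have hsub : (∑ j, ω i ω' j * x j) - (∑ j, ω i ω' j * y j)
        = ∑ j, ω i ω' j * (x j - y j) := by
      rw [← Finset.sum_sub_distrib]
      exact Finset.sum_congr rfl fun j _ => (mul_sub _ _ _).symm
    have hadd : (∑ j, ω i ω' j * x j) + (∑ j, ω i ω' j * y j)
        = ∑ j, ω i ω' j * (x j + y j) := by
      rw [← Finset.sum_add_distrib]
      exact Finset.sum_congr rfl fun j _ => (mul_add _ _ _).symm
    rw [hsub, hadd]
    simp only [hf1, hg2, hg3, hh2, hh3]
    ring
  -- expectation of f1
  have ef1 : ∀ i, ∫ ω', f1 i ω' ∂P = K := by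
    intro i
    have : ∫ ω', f1 i ω' ∂P
        = ∫ w : Fin d → ℝ, Real.cos (∑ j, w j * (x j - y j)) ∂(Measure.map (ω i) P) := by
      rw [integral_map (hmeas_ω i).aemeasurable]
      exact (Real.measurable_cos.comp (Finset.measurable_sum _ fun j _ =>
        (measurable_pi_apply j).mul_const _)).aestronglyMeasurable
    rw [this, hmap_ω i, aux_gauss_pi_cos d v hv]
    rw [hK, hvcoe]
    congr 1
    field_simp
  -- expectation of h2, h3
  have eh2 : ∀ i, ∫ ω', h2 i ω' ∂P = 0 := by
    intro i
    have : ∫ ω', h2 i ω' ∂P = ∫ t : ℝ, Real.cos (2 * t) ∂(Measure.map (b i) P) := by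
      rw [integral_map (hmeas_b i).aemeasurable]
      exact (Real.measurable_cos.comp (measurable_id.const_mul 2)).aestronglyMeasurable
    rw [this, hmap_b i, aux_unif_cos]
  have eh3 : ∀ i, ∫ ω', h3 i ω' ∂P = 0 := by
    intro i
    have : ∫ ω', h3 i ω' ∂P = ∫ t : ℝ, Real.sin (2 * t) ∂(Measure.map (b i) P) := by
      rw [integral_map (hmeas_b i).aemeasurable]
      exact (Real.measurable_sin.comp (measurable_id.const_mul 2)).aestronglyMeasurable
    rw [this, hmap_b i, aux_unif_sin]
  -- independence products
  have eg2h2 : ∀ i, ∫ ω', g2 i ω' * h2 i ω' ∂P = 0 := by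
    intro i
    have hind : IndepFun (g2 i) (h2 i) P :=
      (hindep i).comp
        (Real.measurable_cos.comp (Finset.measurable_sum _ fun j _ =>
          (measurable_pi_apply j).mul_const _))
        (Real.measurable_cos.comp (measurable_id.const_mul 2))
    have := hind.integral_mul_eq_mul_integral (mg2 i).aestronglyMeasurable (mh2 i).aestronglyMeasurable
    rw [show (fun ω' => g2 i ω' * h2 i ω') = g2 i * h2 i from rfl, this, eh2 i, mul_zero]
  have eg3h3 : ∀ i, ∫ ω', g3 i ω' * h3 i ω' ∂P = 0 := by
    intro i
    have hind : IndepFun (g3 i) (h3 i) P :=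
      (hindep i).comp
        (Real.measurable_sin.comp (Finset.measurable_sum _ fun j _ =>
          (measurable_pi_apply j).mul_const _))
        (Real.measurable_sin.comp (measurable_id.const_mul 2))
    have := hind.integral_mul_eq_mul_integral (mg3 i).aestronglyMeasurable (mh3 i).aestronglyMeasurable
    rw [show (fun ω' => g3 i ω' * h3 i ω') = g3 i * h3 i from rfl, this, eh3 i, mul_zero]
  -- per-term expectation
  have eterm : ∀ i : Fin D, ∫ ω',
      ((1 / D) * f1 i ω' + (1 / D) * (g2 i ω' * h2 i ω') - (1 / D) * (g3 i ω' * h3 i ω')) ∂P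
      = (1 / D) * K := by
    intro i
    rw [integral_sub (f := fun ω' => 1/(D:ℝ) * f1 i ω' + 1/(D:ℝ) * (g2 i ω' * h2 i ω'))
      (g := fun ω' => 1/(D:ℝ) * (g3 i ω' * h3 i ω'))
      (((if1 i).const_mul _).add ((ig2h2 i).const_mul _)) ((ig3h3 i).const_mul _)]
    rw [integral_add (f := fun ω' => 1/(D:ℝ) * f1 i ω') (g := fun ω' => 1/(D:ℝ) * (g2 i ω' * h2 i ω'))
      ((if1 i).const_mul _) ((ig2h2 i).const_mul _)]
    rw [integral_const_mul, integral_const_mul, integral_const_mul]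
    rw [ef1 i, eg2h2 i, eg3h3 i]
    ring
  -- put it together
  calc (∫ ω' : Ω, ∑ i : Fin D,
        (Real.sqrt (2 / D) * Real.cos ((∑ j, ω i ω' j * x j) + b i ω')) *
        (Real.sqrt (2 / D) * Real.cos ((∑ j, ω i ω' j * y j) + b i ω')) ∂P)
      = ∫ ω' : Ω, ∑ i : Fin D,
        ((1 / D) * f1 i ω' + (1 / D) * (g2 i ω' * h2 i ω') - (1 / D) * (g3 i ω' * h3 i ω')) ∂P := by
        congr 1
        funext ω'
        exact Finset.sum_congr rfl fun i _ => hpt i ω'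
    _ = ∑ i : Fin D, ∫ ω',
        ((1 / D) * f1 i ω' + (1 / D) * (g2 i ω' * h2 i ω') - (1 / D) * (g3 i ω' * h3 i ω')) ∂P := by
        exact integral_finset_sum _ fun i _ =>
          (((if1 i).const_mul _).add ((ig2h2 i).const_mul _)).sub ((ig3h3 i).const_mul _)
    _ = ∑ _i : Fin D, (1 / (D:ℝ)) * K := Finset.sum_congr rfl fun i _ => eterm i
    _ = K := by
        rw [Finset.sum_const, Finset.card_univ, Fintype.card_fin, nsmul_eq_mul]
        field_simp
end
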